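/- Let V ⊂ ℝ² be a bounded open set whose closure contains a distinguished point Q, with dist(V, {r = 0}) > 0 so that A ≤ r^{-1} ≤ B on V for constants 0 < A ≤ B. Let G ⊂ V satisfy G_λ := Q + λ^{-1}(G - Q) ⊂ V for 0 < λ < 1, and define v_λ by v_λ(p) = v(Q + λ(p - Q)). Let ϑ(p) = |p - Q|. Then there are constants c, C > 0 depending only on A, B such that c λ^{a-1} ‖v‖_{K^m_{a,1}(G)} ≤ ‖v_λ‖_{K^m_{a,1}(G_λ)} ≤ C λ^{a-1} ‖v‖_{K^m_{a,1}(G)} for all integers m ≥ 0 and reals a, where ‖v‖²_{K^m_{a,1}(D)} = Σ_{|α| ≤ m} ∫_D ϑ^{2(|α|-a)} (∂^α v)² r dr dz. -/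

import Mathlib

open MeasureTheory

noncomputable section

abbrev P2 := ℝ × ℝ

def pdr (f : P2 → ℝ) : P2 → ℝ := fun p => fderiv ℝ f p (1, 0)
def pdz (f : P2 → ℝ) : P2 → ℝ := fun p => fderiv ℝ f p (0, 1)

def D2 (α : ℕ × ℕ) (f : P2 → ℝ) : P2 → ℝ := pdr^[α.1] (pdz^[α.2] f)

def wt2 (α : ℕ × ℕ) : ℕ := α.1 + α.2

def idx2 (m : ℕ) : Finset (ℕ × ℕ) :=
  ((Finset.range (m+1)) ×ˢ (Finset.range (m+1))).filter fun α => wt2 α ≤ m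

/-- ϑ(p) = |p - Q|. -/
def thQ (Q p : P2) : ℝ := Real.sqrt ((p.1 - Q.1) ^ 2 + (p.2 - Q.2) ^ 2)

/-- ‖v‖²_{K^m_{a,1}(D)} = Σ_{|α|≤m} ∫_D ϑ^{2(|α|-a)} (∂^α v)² r dr dz, ϑ = dist to Q. -/
def KQ (Q : P2) (D : Set P2) (m : ℕ) (a : ℝ) (v : P2 → ℝ) : ℝ :=
  ∑ α ∈ idx2 m, ∫ p in D, thQ Q p ^ (2 * ((wt2 α : ℝ) - a)) * (D2 α v p) ^ 2 * p.1

-- directional derivative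
def pd (u : P2) (f : P2 → ℝ) : P2 → ℝ := fun p => fderiv ℝ f p u

lemma pdr_eq : pdr = pd (1,0) := rfl
lemma pdz_eq : pdz = pd (0,1) := rfl

lemma contDiff_pd (u : P2) {f : P2 → ℝ} (hf : ContDiff ℝ (⊤:ℕ∞) f) :
    ContDiff ℝ (⊤:ℕ∞) (pd u f) :=
  (hf.fderiv_right (by simp)).clm_apply contDiff_const

lemma contDiff_pd_iter (u : P2) {f : P2 → ℝ} (hf : ContDiff ℝ (⊤:ℕ∞) f) (n : ℕ) :
    ContDiff ℝ (⊤:ℕ∞) ((pd u)^[n] f) := by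
  induction n with
  | zero => exact hf
  | succ n ih => rw [Function.iterate_succ_apply']; exact contDiff_pd u ih

def Smap (Q : P2) (lam : ℝ) : P2 → P2 :=
  fun p => (Q.1 + lam * (p.1 - Q.1), Q.2 + lam * (p.2 - Q.2))

lemma Smap_eq (Q : P2) (lam : ℝ) :
    Smap Q lam = fun p => lam • p + (Q - lam • Q) := by
  funext p
  simp only [Smap, Prod.smul_mk, Prod.mk_add_mk, Prod.mk_sub_mk, smul_eq_mul, Prod.smul_def,
    Prod.mk.injEq, Prod.ext_iff, Prod.fst_add, Prod.snd_add, Prod.fst_sub, Prod.snd_sub,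
    Prod.smul_fst, Prod.smul_snd]
  constructor <;> ring

lemma contDiff_Smap (Q : P2) (lam : ℝ) : ContDiff ℝ (⊤:ℕ∞) (Smap Q lam) := by
  rw [Smap_eq]; exact (contDiff_id.const_smul lam).add contDiff_const

lemma hasFDerivAt_Smap (Q : P2) (lam : ℝ) (p : P2) :
    HasFDerivAt (Smap Q lam) (lam • ContinuousLinearMap.id ℝ P2) p := by
  rw [Smap_eq]
  exact ((hasFDerivAt_id p).const_smul lam).add_const _

lemma pd_comp_Smap (Q : P2) (lam : ℝ) (u : P2) {f : P2 → ℝ} (hf : Differentiable ℝ f) :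
    pd u (fun p => f (Smap Q lam p)) = fun p => lam * pd u f (Smap Q lam p) := by
  funext p
  have h : HasFDerivAt (fun p => f (Smap Q lam p))
      ((fderiv ℝ f (Smap Q lam p)).comp (lam • ContinuousLinearMap.id ℝ P2)) p :=
    (hf (Smap Q lam p)).hasFDerivAt.comp p (hasFDerivAt_Smap Q lam p)
  simp only [pd, h.fderiv, ContinuousLinearMap.coe_comp', Function.comp_apply,
    ContinuousLinearMap.smul_apply, ContinuousLinearMap.coe_id', id_eq]
  rw [ContinuousLinearMap.map_smul, smul_eq_mul]

lemma pd_const_mul (u : P2) (c : ℝ) {g : P2 → ℝ} (hg : Differentiable ℝ g) :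
    pd u (fun p => c * g p) = fun p => c * pd u g p := by
  funext p
  simp only [pd, fderiv_const_mul (hg p) c, ContinuousLinearMap.smul_apply, smul_eq_mul]

lemma pd_iter_const_mul (u : P2) (c : ℝ) (n : ℕ) (g : P2 → ℝ) (hg : ContDiff ℝ (⊤:ℕ∞) g) :
    (pd u)^[n] (fun p => c * g p) = fun p => c * (pd u)^[n] g p := by
  induction n with
  | zero => rfl
  | succ n ih =>
      rw [Function.iterate_succ_apply', Function.iterate_succ_apply', ih]
      exact pd_const_mul u c (((contDiff_pd_iter u hg n)).differentiable (by simp))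

lemma pd_iter_comp (Q : P2) (lam : ℝ) (u : P2) (n : ℕ) {f : P2 → ℝ}
    (hf : ContDiff ℝ (⊤:ℕ∞) f) :
    (pd u)^[n] (fun p => f (Smap Q lam p))
      = fun p => lam ^ n * (pd u)^[n] f (Smap Q lam p) := by
  induction n generalizing f with
  | zero => simp
  | succ n ih =>
      rw [Function.iterate_succ_apply, Function.iterate_succ_apply,
        pd_comp_Smap Q lam u (hf.differentiable (by simp)),
        pd_iter_const_mul u lam n (fun p => pd u f (Smap Q lam p))
          (by exact (contDiff_pd u hf).comp (contDiff_Smap Q lam)),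
        ih (contDiff_pd u hf)]
      funext p; ring

lemma D2_comp (Q : P2) (lam : ℝ) (α : ℕ × ℕ) {v : P2 → ℝ} (hv : ContDiff ℝ (⊤:ℕ∞) v) :
    D2 α (fun p => v (Smap Q lam p))
      = fun p => lam ^ (wt2 α) * D2 α v (Smap Q lam p) := by
  have h1 : (pd (0,1))^[α.2] (fun p => v (Smap Q lam p))
      = fun p => lam ^ α.2 * (pd (0,1))^[α.2] v (Smap Q lam p) :=
    pd_iter_comp Q lam _ _ hv
  have hvz : ContDiff ℝ (⊤:ℕ∞) ((pd (0,1))^[α.2] v) := contDiff_pd_iter _ hv _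
  simp only [D2, pdr_eq, pdz_eq, h1]
  rw [pd_iter_const_mul (1,0) (lam ^ α.2) α.1 (fun p => (pd (0,1))^[α.2] v (Smap Q lam p))
      (by exact hvz.comp (contDiff_Smap Q lam)),
    pd_iter_comp Q lam (1,0) α.1 hvz]
  funext p
  simp only [wt2]
  ring

lemma contDiff_D2 (α : ℕ × ℕ) {v : P2 → ℝ} (hv : ContDiff ℝ (⊤:ℕ∞) v) :
    ContDiff ℝ (⊤:ℕ∞) (D2 α v) := by
  simp only [D2, pdr_eq, pdz_eq]
  exact contDiff_pd_iter _ (contDiff_pd_iter _ hv _) _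

lemma sandwich (G : Set P2) (hG : MeasurableSet G) (f g : P2 → ℝ)
    (hfm : AEStronglyMeasurable f (volume.restrict G))
    (hgm : AEStronglyMeasurable g (volume.restrict G))
    (hf0 : ∀ q ∈ G, 0 ≤ f q) (c C : ℝ) (hc : 0 < c)
    (h1 : ∀ q ∈ G, c * f q ≤ g q) (h2 : ∀ q ∈ G, g q ≤ C * f q) :
    c * ∫ q in G, f q ≤ ∫ q in G, g q ∧ (∫ q in G, g q) ≤ C * ∫ q in G, f q := by
  by_cases hfi : IntegrableOn f G volume
  · have hgi : IntegrableOn g G volume := by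
      refine Integrable.mono' (hfi.const_mul C) hgm ?_
      refine (ae_restrict_iff' hG).2 (ae_of_all _ fun q hq => ?_)
      rw [Real.norm_eq_abs, abs_of_nonneg (le_trans (mul_nonneg hc.le (hf0 q hq)) (h1 q hq))]
      exact h2 q hq
    constructor
    · calc c * ∫ q in G, f q = ∫ q in G, c * f q := (integral_const_mul c f).symm
        _ ≤ ∫ q in G, g q := setIntegral_mono_on (hfi.const_mul c) hgi hG h1
    · calc (∫ q in G, g q) ≤ ∫ q in G, C * f q := setIntegral_mono_on hgi (hfi.const_mul C) hG h2
        _ = C * ∫ q in G, f q := integral_const_mul C f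
  · have hgi : ¬ IntegrableOn g G volume := by
      intro hgi
      refine hfi (Integrable.mono' (hgi.const_mul c⁻¹) hfm ?_)
      refine (ae_restrict_iff' hG).2 (ae_of_all _ fun q hq => ?_)
      rw [Real.norm_eq_abs, abs_of_nonneg (hf0 q hq), inv_mul_eq_div, le_div_iff₀ hc, mul_comm]
      exact h1 q hq
    rw [integral_undef hfi, integral_undef hgi]
    simp

lemma det_smul_id (c : ℝ) : (c • ContinuousLinearMap.id ℝ P2).det = c ^ 2 := by
  rw [ContinuousLinearMap.det, ContinuousLinearMap.coe_smul, ContinuousLinearMap.coe_id,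
    LinearMap.det_smul, LinearMap.det_id, mul_one]
  norm_num [Module.finrank_prod]

lemma thQ_Smap (Q : P2) (lam : ℝ) (p : P2) : thQ Q (Smap Q lam p) = |lam| * thQ Q p := by
  simp only [thQ, Smap]
  rw [show (Q.1 + lam*(p.1-Q.1) - Q.1) = lam*(p.1-Q.1) by ring,
      show (Q.2 + lam*(p.2-Q.2) - Q.2) = lam*(p.2-Q.2) by ring]
  rw [mul_pow, mul_pow, ← mul_add, Real.sqrt_mul (sq_nonneg lam), Real.sqrt_sq_eq_abs]

lemma Smap_inv (Q : P2) (lam : ℝ) (h : lam ≠ 0) (p : P2) :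
    Smap Q lam (Smap Q lam⁻¹ p) = p := by
  cases p with
  | mk x y =>
    simp only [Smap, Prod.mk.injEq]
    constructor <;> (field_simp; ring)

lemma cov (Q : P2) {lam : ℝ} (hl0 : 0 < lam) {G : Set P2} (hG : MeasurableSet G)
    (φ : P2 → ℝ) :
    ∫ p in Smap Q lam⁻¹ '' G, φ p
      = ∫ q in G, (lam⁻¹)^2 * φ (Smap Q lam⁻¹ q) := by
  have hder : ∀ x ∈ G, HasFDerivWithinAt (Smap Q lam⁻¹)
      ((lam⁻¹ : ℝ) • ContinuousLinearMap.id ℝ P2) G x :=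
    fun x _ => (hasFDerivAt_Smap Q lam⁻¹ x).hasFDerivWithinAt
  have hinj : Set.InjOn (Smap Q lam⁻¹) G := by
    intro p hp q hq hpq
    have h2 := congrArg (Smap Q lam) hpq
    rwa [Smap_inv Q lam hl0.ne' p, Smap_inv Q lam hl0.ne' q] at h2
  rw [integral_image_eq_integral_abs_det_fderiv_smul volume hG hder hinj]
  congr 1; funext q
  rw [det_smul_id, smul_eq_mul, abs_of_nonneg (by positivity)]

lemma thQ_nonneg (Q p : P2) : 0 ≤ thQ Q p := Real.sqrt_nonneg _

lemma const_collapse {lam : ℝ} (hl0 : 0 < lam) (k : ℕ) (a : ℝ) :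
    (lam⁻¹) ^ (2:ℕ) * (lam⁻¹) ^ (2*((k:ℝ)-a)) * (lam ^ k) ^ (2:ℕ)
      = lam ^ (2*a-2) := by
  have h1 : ((lam⁻¹) ^ (2:ℕ) : ℝ) = lam ^ (-2 : ℝ) := by
    rw [← Real.rpow_natCast lam⁻¹ 2, Real.inv_rpow hl0.le, ← Real.rpow_neg hl0.le]
    norm_num
  have h2 : (lam⁻¹) ^ (2*((k:ℝ)-a)) = lam ^ (-(2*((k:ℝ)-a))) := by
    rw [Real.inv_rpow hl0.le, ← Real.rpow_neg hl0.le]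
  have h3 : ((lam ^ k) ^ (2:ℕ) : ℝ) = lam ^ ((2*(k:ℕ) : ℕ) : ℝ) := by
    rw [← pow_mul, Real.rpow_natCast, mul_comm]
  rw [h1, h2, h3, ← Real.rpow_add hl0, ← Real.rpow_add hl0]
  congr 1
  push_cast
  ring

/-- near a vertex Q away from the axis (A ≤ r⁻¹ ≤ B on V), the dilation
v_λ(p) = v(Q + λ(p-Q)) on G_λ = Q + λ⁻¹(G - Q) satisfies the two-sided comparison
c λ^{a-1} ‖v‖_{K^m_{a,1}(G)} ≤ ‖v_λ‖_{K^m_{a,1}(G_λ)} ≤ C λ^{a-1} ‖v‖_{K^m_{a,1}(G)},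
with c, C depending only on A, B. -/
theorem stmt_9 (V : Set P2) (hVo : IsOpen V) (hVb : Bornology.IsBounded V)
    (Q : P2) (hQ : Q ∈ closure V)
    (A B : ℝ) (hA : 0 < A) (hAB : A ≤ B)
    (hr : ∀ p ∈ V, A ≤ (p.1)⁻¹ ∧ (p.1)⁻¹ ≤ B) :
    ∃ c > 0, ∃ C > 0, ∀ (m : ℕ) (a : ℝ) (lam : ℝ), 0 < lam → lam < 1 →
      ∀ G ⊆ V, MeasurableSet G →
        (fun p : P2 => (Q.1 + lam⁻¹ * (p.1 - Q.1), Q.2 + lam⁻¹ * (p.2 - Q.2))) '' G ⊆ V →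
        ∀ v : P2 → ℝ, ContDiff ℝ (⊤ : ℕ∞) v →
          c * lam ^ (a - 1) * Real.sqrt (KQ Q G m a v)
              ≤ Real.sqrt (KQ Q
                  ((fun p : P2 =>
                    (Q.1 + lam⁻¹ * (p.1 - Q.1), Q.2 + lam⁻¹ * (p.2 - Q.2))) '' G) m a
                  (fun p => v (Q.1 + lam * (p.1 - Q.1), Q.2 + lam * (p.2 - Q.2)))) ∧
            Real.sqrt (KQ Q
                ((fun p : P2 =>
                  (Q.1 + lam⁻¹ * (p.1 - Q.1), Q.2 + lam⁻¹ * (p.2 - Q.2))) '' G) m a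
                (fun p => v (Q.1 + lam * (p.1 - Q.1), Q.2 + lam * (p.2 - Q.2))))
              ≤ C * lam ^ (a - 1) * Real.sqrt (KQ Q G m a v) := by
  have hB : 0 < B := lt_of_lt_of_le hA hAB
  refine ⟨Real.sqrt (A/B), Real.sqrt_pos.2 (by positivity), Real.sqrt (B/A),
    Real.sqrt_pos.2 (by positivity), ?_⟩
  intro m a lam hl0 hl1 G hGV hG hGl v hv
  have hT : (fun p : P2 => (Q.1 + lam⁻¹ * (p.1 - Q.1), Q.2 + lam⁻¹ * (p.2 - Q.2)))
      = Smap Q lam⁻¹ := rfl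
  have hvl : (fun p : P2 => v (Q.1 + lam * (p.1 - Q.1), Q.2 + lam * (p.2 - Q.2)))
      = fun p => v (Smap Q lam p) := rfl
  rw [hT, hvl]
  rw [hT] at hGl
  -- r bounds
  have hrq : ∀ q ∈ V, 0 < q.1 ∧ A * q.1 ≤ 1 ∧ 1 ≤ B * q.1 := by
    intro q hq
    obtain ⟨h1, h2⟩ := hr q hq
    have hq1 : 0 < q.1 := by
      by_contra hc
      push_neg at hc
      have : q.1⁻¹ ≤ 0 := inv_nonpos.2 hc
      linarith
    have hinv : q.1⁻¹ * q.1 = 1 := inv_mul_cancel₀ hq1.ne'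
    exact ⟨hq1, by nlinarith, by nlinarith⟩
  -- continuity/measurability helpers
  have hthc : Continuous (thQ Q) := by unfold thQ; fun_prop
  have hSc : Continuous (Smap Q lam⁻¹) := (contDiff_Smap Q lam⁻¹).continuous
  -- per-α facts
  have key : ∀ α : ℕ × ℕ,
      (∫ p in Smap Q lam⁻¹ '' G,
          thQ Q p ^ (2*((wt2 α:ℝ)-a)) * (D2 α (fun p => v (Smap Q lam p)) p)^2 * p.1)
        = lam ^ (2*a-2) *
            ∫ q in G, thQ Q q ^ (2*((wt2 α:ℝ)-a)) * (D2 α v q)^2 * (Smap Q lam⁻¹ q).1 := by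
    intro α
    rw [cov Q hl0 hG, ← integral_const_mul]
    congr 1
    funext q
    simp only [D2_comp Q lam α hv, Smap_inv Q lam hl0.ne' q, thQ_Smap,
      abs_of_pos (inv_pos.2 hl0)]
    rw [Real.mul_rpow (inv_nonneg.2 hl0.le) (thQ_nonneg Q q)]
    linear_combination (thQ Q q ^ (2*((wt2 α:ℝ)-a)) * (D2 α v q)^2 * (Smap Q lam⁻¹ q).1) *
      const_collapse hl0 (wt2 α) a
  have sand : ∀ α : ℕ × ℕ,
      (A/B) * (∫ q in G, thQ Q q ^ (2*((wt2 α:ℝ)-a)) * (D2 α v q)^2 * q.1)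
        ≤ (∫ q in G, thQ Q q ^ (2*((wt2 α:ℝ)-a)) * (D2 α v q)^2 * (Smap Q lam⁻¹ q).1)
      ∧ (∫ q in G, thQ Q q ^ (2*((wt2 α:ℝ)-a)) * (D2 α v q)^2 * (Smap Q lam⁻¹ q).1)
        ≤ (B/A) * ∫ q in G, thQ Q q ^ (2*((wt2 α:ℝ)-a)) * (D2 α v q)^2 * q.1 := by
    intro α
    have hD2c : Continuous (D2 α v) := (contDiff_D2 α hv).continuous
    have hthm : Measurable (thQ Q) := hthc.measurable
    have hD2m : Measurable (D2 α v) := hD2c.measurable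
    have hSm : Measurable (Smap Q lam⁻¹) := hSc.measurable
    have hhm : Measurable fun q : P2 => thQ Q q ^ (2*((wt2 α:ℝ)-a)) * (D2 α v q)^2 := by
      fun_prop
    have hh0 : ∀ q : P2, 0 ≤ thQ Q q ^ (2*((wt2 α:ℝ)-a)) * (D2 α v q)^2 :=
      fun q => mul_nonneg (Real.rpow_nonneg (thQ_nonneg Q q) _) (sq_nonneg _)
    refine sandwich G hG (fun q => thQ Q q ^ (2*((wt2 α:ℝ)-a)) * (D2 α v q)^2 * q.1)
      (fun q => thQ Q q ^ (2*((wt2 α:ℝ)-a)) * (D2 α v q)^2 * (Smap Q lam⁻¹ q).1)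
      (by exact (hhm.mul measurable_fst).aestronglyMeasurable)
      (by exact (hhm.mul (measurable_fst.comp hSm)).aestronglyMeasurable)
      (fun q hq => mul_nonneg (hh0 q) (hrq q (hGV hq)).1.le) (A/B) (B/A) (by positivity)
      ?_ ?_
    · intro q hq
      obtain ⟨hq1, hq2, hq3⟩ := hrq q (hGV hq)
      obtain ⟨ht1, ht2, ht3⟩ := hrq (Smap Q lam⁻¹ q) (hGl (Set.mem_image_of_mem _ hq))
      have hb : (A/B) * q.1 ≤ (Smap Q lam⁻¹ q).1 := by
        rw [div_mul_eq_mul_div, div_le_iff₀ hB]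
        nlinarith
      calc (A/B) * (thQ Q q ^ (2*((wt2 α:ℝ)-a)) * (D2 α v q)^2 * q.1)
          = (thQ Q q ^ (2*((wt2 α:ℝ)-a)) * (D2 α v q)^2) * ((A/B) * q.1) := by ring
        _ ≤ (thQ Q q ^ (2*((wt2 α:ℝ)-a)) * (D2 α v q)^2) * (Smap Q lam⁻¹ q).1 :=
            mul_le_mul_of_nonneg_left hb (hh0 q)
    · intro q hq
      obtain ⟨hq1, hq2, hq3⟩ := hrq q (hGV hq)
      obtain ⟨ht1, ht2, ht3⟩ := hrq (Smap Q lam⁻¹ q) (hGl (Set.mem_image_of_mem _ hq))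
      have hb : (Smap Q lam⁻¹ q).1 ≤ (B/A) * q.1 := by
        rw [div_mul_eq_mul_div, le_div_iff₀ hA]
        nlinarith
      calc thQ Q q ^ (2*((wt2 α:ℝ)-a)) * (D2 α v q)^2 * (Smap Q lam⁻¹ q).1
          ≤ (thQ Q q ^ (2*((wt2 α:ℝ)-a)) * (D2 α v q)^2) * ((B/A) * q.1) :=
            mul_le_mul_of_nonneg_left hb (hh0 q)
        _ = (B/A) * (thQ Q q ^ (2*((wt2 α:ℝ)-a)) * (D2 α v q)^2 * q.1) := by ring
  -- assemble
  set Jsum := ∑ α ∈ idx2 m,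
      ∫ q in G, thQ Q q ^ (2*((wt2 α:ℝ)-a)) * (D2 α v q)^2 * (Smap Q lam⁻¹ q).1 with hJ
  have hKl : KQ Q (Smap Q lam⁻¹ '' G) m a (fun p => v (Smap Q lam p))
      = lam ^ (2*a-2) * Jsum := by
    rw [hJ, Finset.mul_sum]
    exact Finset.sum_congr rfl fun α _ => key α
  have hlow : (A/B) * KQ Q G m a v ≤ Jsum := by
    rw [KQ, Finset.mul_sum, hJ]
    exact Finset.sum_le_sum fun α _ => (sand α).1
  have hup : Jsum ≤ (B/A) * KQ Q G m a v := by
    rw [KQ, Finset.mul_sum, hJ]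
    exact Finset.sum_le_sum fun α _ => (sand α).2
  have hK0 : 0 ≤ KQ Q G m a v := by
    refine Finset.sum_nonneg fun α _ => setIntegral_nonneg hG fun q hq => ?_
    exact mul_nonneg (mul_nonneg (Real.rpow_nonneg (thQ_nonneg Q q) _) (sq_nonneg _))
      (hrq q (hGV hq)).1.le
  have hrp : 0 < lam ^ (2*a-2) := Real.rpow_pos_of_pos hl0 _
  have hs2 : Real.sqrt (lam ^ (2*a-2)) = lam ^ (a-1) := by
    rw [show (2*a-2) = (a-1)*2 by ring, Real.rpow_mul hl0.le,
      show ((2:ℝ)) = ((2:ℕ):ℝ) by norm_num, Real.rpow_natCast,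
      Real.sqrt_sq (Real.rpow_nonneg hl0.le _)]
  constructor
  · have h1 : Real.sqrt ((A/B) * lam ^ (2*a-2) * KQ Q G m a v)
        ≤ Real.sqrt (KQ Q (Smap Q lam⁻¹ '' G) m a (fun p => v (Smap Q lam p))) := by
      apply Real.sqrt_le_sqrt
      rw [hKl]
      calc (A/B) * lam ^ (2*a-2) * KQ Q G m a v
          = lam ^ (2*a-2) * ((A/B) * KQ Q G m a v) := by ring
        _ ≤ lam ^ (2*a-2) * Jsum := mul_le_mul_of_nonneg_left hlow hrp.le
    calc Real.sqrt (A/B) * lam ^ (a-1) * Real.sqrt (KQ Q G m a v)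
        = Real.sqrt ((A/B) * lam ^ (2*a-2) * KQ Q G m a v) := by
          rw [Real.sqrt_mul (by positivity : (0:ℝ) ≤ A/B * lam ^ (2*a-2)),
            Real.sqrt_mul (by positivity : (0:ℝ) ≤ A/B), hs2]
      _ ≤ _ := h1
  · have h1 : Real.sqrt (KQ Q (Smap Q lam⁻¹ '' G) m a (fun p => v (Smap Q lam p)))
        ≤ Real.sqrt ((B/A) * lam ^ (2*a-2) * KQ Q G m a v) := by
      apply Real.sqrt_le_sqrt
      rw [hKl]
      calc lam ^ (2*a-2) * Jsum
          ≤ lam ^ (2*a-2) * ((B/A) * KQ Q G m a v) := mul_le_mul_of_nonneg_left hup hrp.le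
        _ = (B/A) * lam ^ (2*a-2) * KQ Q G m a v := by ring
    calc Real.sqrt (KQ Q (Smap Q lam⁻¹ '' G) m a (fun p => v (Smap Q lam p)))
        ≤ Real.sqrt ((B/A) * lam ^ (2*a-2) * KQ Q G m a v) := h1
      _ = Real.sqrt (B/A) * lam ^ (a-1) * Real.sqrt (KQ Q G m a v) := by
          rw [Real.sqrt_mul (by positivity : (0:ℝ) ≤ B/A * lam ^ (2*a-2)),
            Real.sqrt_mul (by positivity : (0:ℝ) ≤ B/A), hs2]
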